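/- For any cubic graph G (3-regular), the independent domination number satisfies 2·i(G) ≤ 3·γ(G). -/

import Mathlib

open Finset

/-- `D` is a dominating set of `G`: every vertex outside `D` has a neighbor in `D`. -/
def IsDomSet {V : Type*} (G : SimpleGraph V) (D : Finset V) : Prop :=
  ∀ v ∉ D, ∃ u ∈ D, G.Adj u v

/-- `D` is an independent set of `G`. -/
def IsIndepSet {V : Type*} (G : SimpleGraph V) (D : Finset V) : Prop :=
  ∀ u ∈ D, ∀ v ∈ D, ¬ G.Adj u v

/-- The domination number. -/
noncomputable def domNum {V : Type*} [Fintype V] (G : SimpleGraph V) : ℕ :=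
  sInf {n | ∃ D : Finset V, IsDomSet G D ∧ D.card = n}

/-- The independent domination number. -/
noncomputable def indDomNum {V : Type*} [Fintype V] (G : SimpleGraph V) : ℕ :=
  sInf {n | ∃ D : Finset V, IsDomSet G D ∧ IsIndepSet G D ∧ D.card = n}

theorem stmt19 {V : Type*} [Fintype V] (G : SimpleGraph V) [DecidableRel G.Adj]
    (hcubic : G.IsRegularOfDegree 3) :
    2 * indDomNum G ≤ 3 * domNum G := by
  classical
  -- obtain a minimum dominating set D
  obtain ⟨D, hDdom, hDcard⟩ : ∃ D : Finset V, IsDomSet G D ∧ D.card = domNum G := by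
    have hne : {n | ∃ D : Finset V, IsDomSet G D ∧ D.card = n}.Nonempty :=
      ⟨(univ : Finset V).card, univ, fun v hv => absurd (mem_univ v) hv, rfl⟩
    obtain ⟨D, h1, h2⟩ := Nat.sInf_mem hne
    exact ⟨D, h1, h2⟩
  -- M : maximum independent subset of D
  obtain ⟨M, hMmem, hMmax⟩ :=
    Finset.exists_max_image (D.powerset.filter (fun s => IsIndepSet G s)) Finset.card
      ⟨∅, by rw [mem_filter]; exact ⟨empty_mem_powerset D, by simp [IsIndepSet]⟩⟩
  rw [mem_filter, mem_powerset] at hMmem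
  obtain ⟨hMD, hMind⟩ := hMmem
  have hMmax' : ∀ s : Finset V, s ⊆ D → IsIndepSet G s → s.card ≤ M.card := by
    intro s hs hind
    exact hMmax s (by rw [mem_filter, mem_powerset]; exact ⟨hs, hind⟩)
  -- every vertex of D \ M has a neighbor in M
  have hMdom : ∀ d ∈ D, d ∉ M → ∃ m ∈ M, G.Adj m d := by
    intro d hdD hdM
    by_contra h
    push_neg at h
    have hind : IsIndepSet G (insert d M) := by
      intro u hu v hv hadj
      rcases mem_insert.1 hu with hud | hu <;> rcases mem_insert.1 hv with hvd | hv
      · rw [hud, hvd] at hadj; exact G.loopless.irrefl d hadj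
      · rw [hud] at hadj; exact h v hv hadj.symm
      · rw [hvd] at hadj; exact h u hu hadj
      · exact hMind u hu v hv hadj
    have hle := hMmax' _ (insert_subset hdD hMD) hind
    rw [Finset.card_insert_of_notMem hdM] at hle
    omega
  -- I : maximum independent set containing M
  obtain ⟨I, hImem, hImax⟩ :=
    Finset.exists_max_image (univ.powerset.filter (fun s => IsIndepSet G s ∧ M ⊆ s))
      Finset.card ⟨M, by rw [mem_filter]; exact ⟨mem_powerset.2 (subset_univ M), hMind, subset_rfl⟩⟩
  rw [mem_filter] at hImem
  obtain ⟨-, hIind, hMI⟩ := hImem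
  -- I is dominating
  have hIdom : IsDomSet G I := by
    intro v hv
    by_contra h
    push_neg at h
    have hind : IsIndepSet G (insert v I) := by
      intro a ha b hb hadj
      rcases mem_insert.1 ha with hav | ha <;> rcases mem_insert.1 hb with hbv | hb
      · rw [hav, hbv] at hadj; exact G.loopless.irrefl v hadj
      · rw [hav] at hadj; exact h b hb hadj.symm
      · rw [hbv] at hadj; exact h a ha hadj
      · exact hIind a ha b hb hadj
    have hle := hImax _ (by
      rw [mem_filter]
      exact ⟨mem_powerset.2 (subset_univ _), hind, hMI.trans (subset_insert v I)⟩)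
    rw [Finset.card_insert_of_notMem hv] at hle
    omega
  have hInd : indDomNum G ≤ I.card := Nat.sInf_le ⟨I, hIdom, hIind, rfl⟩
  set B : Finset V := D \ M with hB
  set J : Finset V := I \ M with hJ
  -- B is disjoint from I
  have hBI : ∀ d ∈ B, d ∉ I := by
    intro d hd hdI
    obtain ⟨hdD, hdM⟩ := mem_sdiff.1 hd
    obtain ⟨m, hm, hadj⟩ := hMdom d hdD hdM
    exact hIind m (hMI hm) d hdI hadj
  -- every vertex of J has a neighbor in B
  have hJB : ∀ u ∈ J, ∃ d ∈ B, G.Adj d u := by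
    intro u hu
    obtain ⟨huI, huM⟩ := mem_sdiff.1 hu
    have huD : u ∉ D := by
      intro huD
      obtain ⟨m, hm, hadj⟩ := hMdom u huD huM
      exact hIind m (hMI hm) u huI hadj
    obtain ⟨d, hdD, hadj⟩ := hDdom u huD
    have hdM : d ∉ M := fun hdM => hIind d (hMI hdM) u huI hadj
    exact ⟨d, mem_sdiff.2 ⟨hdD, hdM⟩, hadj⟩
  -- per-vertex counting for d ∈ B
  have hkey : ∀ d ∈ B, (G.neighborFinset d ∩ J).card + (G.neighborFinset d ∩ B).card ≤ 2 := by
    intro d hd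
    obtain ⟨hdD, hdM⟩ := mem_sdiff.1 hd
    obtain ⟨m, hm, hadj⟩ := hMdom d hdD hdM
    have hmem : m ∈ G.neighborFinset d ∩ M :=
      mem_inter.2 ⟨(G.mem_neighborFinset d m).2 hadj.symm, hm⟩
    have h1 : 1 ≤ (G.neighborFinset d ∩ M).card := card_pos.2 ⟨m, hmem⟩
    have hdisj1 : Disjoint (G.neighborFinset d ∩ M) (G.neighborFinset d ∩ B) := by
      apply Finset.disjoint_left.2
      intro a ha hb
      exact (mem_sdiff.1 (mem_inter.1 hb).2).2 (mem_inter.1 ha).2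
    have hdisj2 : Disjoint (G.neighborFinset d ∩ M ∪ G.neighborFinset d ∩ B)
        (G.neighborFinset d ∩ J) := by
      apply Finset.disjoint_left.2
      intro a ha hj
      have haJ := (mem_inter.1 hj).2
      obtain ⟨haI, haM⟩ := mem_sdiff.1 haJ
      rcases mem_union.1 ha with h | h
      · exact haM (mem_inter.1 h).2
      · exact hBI a (mem_inter.1 h).2 haI
    have hsub : (G.neighborFinset d ∩ M ∪ G.neighborFinset d ∩ B) ∪ G.neighborFinset d ∩ J
        ⊆ G.neighborFinset d := by
      intro a ha
      rcases mem_union.1 ha with h | h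
      · rcases mem_union.1 h with h | h
        · exact (mem_inter.1 h).1
        · exact (mem_inter.1 h).1
      · exact (mem_inter.1 h).1
    have hcard := Finset.card_le_card hsub
    rw [Finset.card_union_of_disjoint hdisj2, Finset.card_union_of_disjoint hdisj1] at hcard
    have hdeg : (G.neighborFinset d).card = 3 := hcubic d
    omega
  -- J.card ≤ sum over B of neighbors in J
  have hJle : J.card ≤ ∑ d ∈ B, (G.neighborFinset d ∩ J).card := by
    calc J.card ≤ (B.biUnion (fun d => G.neighborFinset d ∩ J)).card := by
          apply Finset.card_le_card
          intro u hu
          obtain ⟨d, hd, hadj⟩ := hJB u hu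
          exact Finset.mem_biUnion.2 ⟨d, hd, mem_inter.2 ⟨(G.mem_neighborFinset d u).2 hadj, hu⟩⟩
      _ ≤ ∑ d ∈ B, (G.neighborFinset d ∩ J).card := Finset.card_biUnion_le
  -- sum bound
  have hSE : (∑ d ∈ B, (G.neighborFinset d ∩ J).card) + (∑ d ∈ B, (G.neighborFinset d ∩ B).card)
      ≤ 2 * B.card := by
    rw [← Finset.sum_add_distrib]
    calc (∑ d ∈ B, ((G.neighborFinset d ∩ J).card + (G.neighborFinset d ∩ B).card))
        ≤ ∑ _d ∈ B, 2 := Finset.sum_le_sum hkey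
      _ = 2 * B.card := by rw [Finset.sum_const, smul_eq_mul, mul_comm]
  -- vertex cover bound : B.card ≤ M.card + E
  have hbE : B.card ≤ M.card + ∑ d ∈ B, (G.neighborFinset d ∩ B).card := by
    set C : Finset V := B.filter (fun d => 0 < (G.neighborFinset d ∩ B).card) with hC
    have hCE : C.card ≤ ∑ d ∈ B, (G.neighborFinset d ∩ B).card := by
      calc C.card = ∑ _d ∈ C, 1 := by rw [Finset.sum_const, smul_eq_mul, mul_one]
        _ ≤ ∑ d ∈ C, (G.neighborFinset d ∩ B).card :=
            Finset.sum_le_sum (fun d hd => (mem_filter.1 hd).2)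
        _ ≤ ∑ d ∈ B, (G.neighborFinset d ∩ B).card :=
            Finset.sum_le_sum_of_subset (Finset.filter_subset _ _)
    have hBCind : IsIndepSet G (B \ C) := by
      intro u hu v hv hadj
      obtain ⟨huB, huC⟩ := mem_sdiff.1 hu
      have hvB := (mem_sdiff.1 hv).1
      apply huC
      rw [hC, mem_filter]
      refine ⟨huB, card_pos.2 ⟨v, mem_inter.2 ⟨(G.mem_neighborFinset u v).2 hadj, hvB⟩⟩⟩
    have hBCle : (B \ C).card ≤ M.card :=
      hMmax' _ ((Finset.sdiff_subset).trans (Finset.sdiff_subset)) hBCind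
    have hsplit : (B \ C).card + C.card = B.card :=
      Finset.card_sdiff_add_card_eq_card (Finset.filter_subset _ _)
    omega
  -- cardinality relations
  have hIcard : J.card + M.card = I.card := Finset.card_sdiff_add_card_eq_card hMI
  have hDcard2 : B.card + M.card = D.card := Finset.card_sdiff_add_card_eq_card hMD
  omega
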